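/- arXiv:1502.07775 — 2 statements merged into one kernel-verified Lean document; each statement's English description precedes it below -/
import Mathlib

section
/- Let γ, σ, M > 0 and let g : [0,∞) → ℝ and g_N : [0,∞) → ℝ (N ∈ ℕ) be continuous with g, g_N ≥ σ, |g(q) − ℓ| ≤ M e^{−γ q} and |g_N(q) − ℓ| ≤ M e^{−γ q} for a common constant ℓ, and ‖g_N − g‖_{L^∞} → 0. Let x, x_N : [0,∞) → ℝ solve ẋ = g(x), x(0) = 0 and ẋ_N = g_N(x_N), x_N(0) = 0. Then ‖x_N − x‖_{L^∞([0,∞))} → 0 as N → ∞. -/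
open Set

/-- A solution of `ẋ = g(x)`, `x 0 = 0` with `g ≥ σ > 0` on `[0,∞)` stays nonnegative. -/
lemma bed_aux_nonneg {σ : ℝ} (hσ : 0 < σ) {g x : ℝ → ℝ}
    (hglb : ∀ q ≥ (0:ℝ), σ ≤ g q)
    (hx : ∀ t ≥ (0:ℝ), HasDerivAt x (g (x t)) t) (hx0 : x 0 = 0) :
    ∀ t ≥ (0:ℝ), 0 ≤ x t := by
  intro t₁ ht₁
  by_contra hneg
  push_neg at hneg
  have ht₁0 : 0 < t₁ := by
    rcases ht₁.eq_or_lt with h | h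
    · exfalso; rw [← h, hx0] at hneg; exact lt_irrefl _ hneg
    · exact h
  set S : Set ℝ := Icc 0 t₁ ∩ x ⁻¹' Ici 0 with hSdef
  have hS0 : (0:ℝ) ∈ S := ⟨⟨le_rfl, ht₁⟩, by simp [hx0]⟩
  have hSbdd : BddAbove S := ⟨t₁, fun s hs => hs.1.2⟩
  have hxc : ContinuousOn x (Icc 0 t₁) := fun s hs =>
    ((hx s hs.1).continuousAt).continuousWithinAt
  have hSclosed : IsClosed S :=
    hxc.preimage_isClosed_of_isClosed isClosed_Icc isClosed_Ici
  set s₀ := sSup S with hs₀def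
  have hs₀S : s₀ ∈ S := hSclosed.csSup_mem ⟨0, hS0⟩ hSbdd
  have hs₀x : 0 ≤ x s₀ := hs₀S.2
  have hs₀lt : s₀ < t₁ := by
    rcases lt_or_eq_of_le hs₀S.1.2 with h | h
    · exact h
    · exfalso; rw [h] at hs₀x; linarith
  have hd : HasDerivAt x (g (x s₀)) s₀ := hx s₀ hs₀S.1.1
  have hgpos : 0 < g (x s₀) := hσ.trans_le (hglb _ hs₀x)
  have hslope : Filter.Tendsto (slope x s₀) (nhdsWithin s₀ {s₀}ᶜ) (nhds (g (x s₀))) :=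
    hasDerivAt_iff_tendsto_slope.1 hd
  have h1 : ∀ᶠ u in nhdsWithin s₀ {s₀}ᶜ, 0 < slope x s₀ u :=
    hslope.eventually_mem (Ioi_mem_nhds hgpos)
  have hmono : nhdsWithin s₀ (Ioi s₀) ≤ nhdsWithin s₀ {s₀}ᶜ :=
    nhdsWithin_mono s₀ (fun u hu => ne_of_gt hu)
  have h1' : ∀ᶠ u in nhdsWithin s₀ (Ioi s₀), 0 < slope x s₀ u := h1.filter_mono hmono
  have h2 : Ioc s₀ t₁ ∈ nhdsWithin s₀ (Ioi s₀) := Ioc_mem_nhdsGT_of_mem ⟨le_rfl, hs₀lt⟩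
  obtain ⟨u, hu1, hu2⟩ := (h1'.and h2).exists
  have hus : s₀ < u := hu2.1
  have hxu : 0 ≤ x u := by
    rw [slope_def_field] at hu1
    have hden : 0 < u - s₀ := sub_pos.2 hus
    have : 0 < x u - x s₀ := by
      rcases div_pos_iff.1 hu1 with ⟨h1, _⟩ | ⟨_, h2⟩
      · exact h1
      · linarith
    linarith
  have huS : u ∈ S := ⟨⟨le_trans hs₀S.1.1 hus.le, hu2.2⟩, hxu⟩
  have : u ≤ s₀ := le_csSup hSbdd huS
  linarith

/-- The change-of-variables identity `∫₀^{x t} 1/g = t`. -/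
lemma bed_aux_integral {σ : ℝ} (hσ : 0 < σ) {g x : ℝ → ℝ}
    (hgc : ContinuousOn g (Ici 0)) (hglb : ∀ q ≥ (0:ℝ), σ ≤ g q)
    (hx : ∀ t ≥ (0:ℝ), HasDerivAt x (g (x t)) t) (hx0 : x 0 = 0) :
    ∀ t ≥ (0:ℝ), (∫ q in (0:ℝ)..(x t), (g q)⁻¹) = t := by
  have hnn := bed_aux_nonneg hσ hglb hx hx0
  have hgne : ∀ q ∈ Ici (0:ℝ), g q ≠ 0 := fun q hq => ne_of_gt (hσ.trans_le (hglb q hq))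
  set f : ℝ → ℝ := fun q => (g q)⁻¹ with hfdef
  have hfc : ContinuousOn f (Ici 0) := hgc.inv₀ hgne
  have hsub : ∀ a b : ℝ, 0 ≤ a → 0 ≤ b → uIcc a b ⊆ Ici 0 := by
    intro a b ha hb q hq
    exact le_trans (le_min ha hb) hq.1
  have intf : ∀ a b : ℝ, 0 ≤ a → 0 ≤ b → IntervalIntegrable f MeasureTheory.volume a b :=
    fun a b ha hb => (hfc.mono (hsub a b ha hb)).intervalIntegrable
  -- monotonicity of x on [0,∞)
  have hxc : ContinuousOn x (Ici 0) := fun s hs => ((hx s hs).continuousAt).continuousWithinAt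
  have hmono : StrictMonoOn x (Ici 0) := by
    apply strictMonoOn_of_deriv_pos (convex_Ici 0) hxc
    intro s hs
    rw [interior_Ici] at hs
    rw [(hx s (le_of_lt hs)).deriv]
    exact hσ.trans_le (hglb _ (hnn s hs.le))
  intro t ht
  rcases ht.eq_or_lt with h | h
  · rw [← h, hx0, intervalIntegral.integral_same]
  -- t > 0 : show φ is constant on [0, t] where φ s = ∫₀^{x s} f − s
  set φ : ℝ → ℝ := fun s => (∫ q in (0:ℝ)..(x s), f q) - s with hφdef
  have hderiv : ∀ s ∈ Ico (0:ℝ) t, HasDerivWithinAt φ 0 (Ici s) s := by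
    intro s hs
    rcases hs.1.eq_or_lt with h0 | h0
    · -- s = 0 : boundary case, use within-derivative
      subst h0
      have hmeas : StronglyMeasurableAtFilter f (nhdsWithin 0 (Ioi 0))
          MeasureTheory.volume :=
        ⟨Ici 0, Filter.mem_of_superset self_mem_nhdsWithin Ioi_subset_Ici_self,
          hfc.aestronglyMeasurable measurableSet_Ici⟩
      have FTCW : HasDerivWithinAt (fun u => ∫ q in (0:ℝ)..u, f q) (f 0) (Ici 0) 0 :=
        intervalIntegral.integral_hasDerivWithinAt_right (intf 0 0 le_rfl le_rfl)
          hmeas ((hfc 0 (mem_Ici.mpr le_rfl)).mono Ioi_subset_Ici_self)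
      have FTCW' : HasDerivWithinAt (fun u => ∫ q in (0:ℝ)..u, f q) (f (x 0)) (Ici 0) (x 0) := by
        rw [hx0]; exact FTCW
      have hmaps : MapsTo x (Ici 0) (Ici 0) := fun u hu => hnn u hu
      have hcomp := FTCW'.comp (0:ℝ) ((hx 0 le_rfl).hasDerivWithinAt) hmaps
      have hder : HasDerivWithinAt φ (f (x 0) * g (x 0) - 1) (Ici 0) 0 :=
        hcomp.sub ((hasDerivAt_id (0:ℝ)).hasDerivWithinAt)
      have h0' : f (x 0) * g (x 0) - 1 = 0 := by
        rw [hfdef, hx0]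
        field_simp [hgne 0 (mem_Ici.mpr le_rfl)]
        norm_num
      rw [h0'] at hder
      exact hder
    · -- s > 0 : full derivative
      have hxs : 0 < x s := by
        rw [← hx0]
        exact hmono (mem_Ici.mpr le_rfl) (mem_Ici.mpr h0.le) h0
      have hmeas : StronglyMeasurableAtFilter f (nhds (x s))
          MeasureTheory.volume :=
        ⟨Ioi 0, Ioi_mem_nhds hxs, (hfc.mono Ioi_subset_Ici_self).aestronglyMeasurable
          measurableSet_Ioi⟩
      have hcont : ContinuousAt f (x s) := hfc.continuousAt (Ici_mem_nhds hxs)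
      have FTC : HasDerivAt (fun u => ∫ q in (0:ℝ)..u, f q) (f (x s)) (x s) :=
        intervalIntegral.integral_hasDerivAt_right (intf 0 (x s) le_rfl hxs.le) hmeas hcont
      have hcomp := FTC.comp s (hx s h0.le)
      have : HasDerivAt φ (f (x s) * g (x s) - 1) s := hcomp.sub (hasDerivAt_id s)
      have h0' : f (x s) * g (x s) - 1 = 0 := by
        rw [hfdef]
        field_simp [hgne (x s) (mem_Ici.mpr hxs.le)]
        norm_num
      rw [h0'] at this
      exact this.hasDerivWithinAt
  have hφcont : ContinuousOn φ (Icc 0 t) := by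
    intro s hs
    rcases hs.1.eq_or_lt with h0 | h0
    · subst h0
      exact ((hderiv 0 ⟨le_rfl, h⟩).continuousWithinAt).mono
        (fun u hu => (hu.1 : (0:ℝ) ≤ u))
    · -- s > 0 : HasDerivAt at s
      have hxs : 0 < x s := by
        rw [← hx0]; exact hmono (mem_Ici.mpr le_rfl) (mem_Ici.mpr h0.le) h0
      have hmeas : StronglyMeasurableAtFilter f (nhds (x s))
          MeasureTheory.volume :=
        ⟨Ioi 0, Ioi_mem_nhds hxs, (hfc.mono Ioi_subset_Ici_self).aestronglyMeasurable
          measurableSet_Ioi⟩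
      have hcont : ContinuousAt f (x s) := hfc.continuousAt (Ici_mem_nhds hxs)
      have FTC : HasDerivAt (fun u => ∫ q in (0:ℝ)..u, f q) (f (x s)) (x s) :=
        intervalIntegral.integral_hasDerivAt_right (intf 0 (x s) le_rfl hxs.le) hmeas hcont
      have : HasDerivAt φ (f (x s) * g (x s) - 1) s :=
        (FTC.comp s (hx s h0.le)).sub (hasDerivAt_id s)
      exact this.continuousAt.continuousWithinAt
  have hconst := constant_of_has_deriv_right_zero hφcont hderiv t ⟨ht, le_rfl⟩
  have hφ0 : φ 0 = 0 := by simp [hφdef, hx0]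
  rw [hφ0] at hconst
  have : (∫ q in (0:ℝ)..(x t), f q) - t = 0 := hconst
  linarith

/-- Convergence of the ocean-bed parameterizations: if `g_N → g` uniformly on
`[0,∞)`, all uniformly bounded below by `σ > 0` and exponentially localized around
a common limit `ℓ`, then the solutions of `ẋ = g(x)`, `ẋ_N = g_N(x_N)` with zero
initial data converge uniformly on `[0,∞)`. -/
theorem bed_parameterization_convergence (γ σ M ℓ : ℝ)
    (hγ : 0 < γ) (hσ : 0 < σ) (hM : 0 < M)
    (g : ℝ → ℝ) (gN : ℕ → ℝ → ℝ)
    (hgc : ContinuousOn g (Ici 0)) (hgNc : ∀ N, ContinuousOn (gN N) (Ici 0))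
    (hglb : ∀ q ≥ (0:ℝ), σ ≤ g q) (hgNlb : ∀ N, ∀ q ≥ (0:ℝ), σ ≤ gN N q)
    (hgdecay : ∀ q ≥ (0:ℝ), |g q - ℓ| ≤ M * Real.exp (-γ * q))
    (hgNdecay : ∀ N, ∀ q ≥ (0:ℝ), |gN N q - ℓ| ≤ M * Real.exp (-γ * q))
    (hconv : ∀ ε > 0, ∃ N₀, ∀ N ≥ N₀, ∀ q ≥ (0:ℝ), |gN N q - g q| ≤ ε)
    (x : ℝ → ℝ) (xN : ℕ → ℝ → ℝ)
    (hx : ∀ t ≥ (0:ℝ), HasDerivAt x (g (x t)) t) (hx0 : x 0 = 0)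
    (hxN : ∀ N, ∀ t ≥ (0:ℝ), HasDerivAt (xN N) (gN N (xN N t)) t)
    (hxN0 : ∀ N, xN N 0 = 0) :
    ∀ ε > 0, ∃ N₀, ∀ N ≥ N₀, ∀ t ≥ (0:ℝ), |xN N t - x t| ≤ ε := by
  have hnnx := bed_aux_nonneg hσ hglb hx hx0
  have hidx := bed_aux_integral hσ hgc hglb hx hx0
  have hexp1 : ∀ q ≥ (0:ℝ), Real.exp (-γ * q) ≤ 1 := by
    intro q hq
    rw [Real.exp_le_one_iff]
    nlinarith
  have hgub : ∀ q ≥ (0:ℝ), g q ≤ ℓ + M := by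
    intro q hq
    have h1 := (abs_le.1 (hgdecay q hq)).2
    have h2 := hexp1 q hq
    nlinarith
  set C := ℓ + M with hCdef
  have hCpos : 0 < C := lt_of_lt_of_le hσ (le_trans (hglb 0 le_rfl) (hgub 0 le_rfl))
  have hgq : ∀ q ≥ (0:ℝ), 0 < g q := fun q hq => hσ.trans_le (hglb q hq)
  intro ε hε
  -- choose `Q` so that the exponential tail is small
  have h1 : Filter.Tendsto (fun Q : ℝ => -γ * Q) Filter.atTop Filter.atBot :=
    (Filter.tendsto_const_mul_atBot_of_neg (neg_lt_zero.mpr hγ)).mpr Filter.tendsto_id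
  have htends : Filter.Tendsto (fun Q : ℝ => (2 * M / (γ * σ ^ 2)) * Real.exp (-γ * Q))
      Filter.atTop (nhds 0) := by
    have h2 := Real.tendsto_exp_atBot.comp h1
    have h3 := h2.const_mul (2 * M / (γ * σ ^ 2))
    simpa using h3
  have hhalf : 0 < ε / (2 * C) := by positivity
  obtain ⟨Q, hQbig, hQ0⟩ :=
    ((htends.eventually_le_const hhalf).and (Filter.eventually_ge_atTop (0:ℝ))).exists
  set ε' := ε * σ ^ 2 / (2 * C * (Q + 1)) with hε'def
  have hQ1 : (0:ℝ) < Q + 1 := by linarith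
  have hden : (0:ℝ) < 2 * C * (Q + 1) := by positivity
  have hε'pos : 0 < ε' := div_pos (by positivity) hden
  obtain ⟨N₀, hN₀⟩ := hconv ε' hε'pos
  refine ⟨N₀, fun N hN t ht => ?_⟩
  have hnnz := bed_aux_nonneg hσ (hgNlb N) (hxN N) (hxN0 N)
  have hidz := bed_aux_integral hσ (hgNc N) (hgNlb N) (hxN N) (hxN0 N)
  have hgNq : ∀ q ≥ (0:ℝ), 0 < gN N q := fun q hq => hσ.trans_le (hgNlb N q hq)
  have hgNub : ∀ q ≥ (0:ℝ), gN N q ≤ C := by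
    intro q hq
    have h1 := (abs_le.1 (hgNdecay N q hq)).2
    have h2 := hexp1 q hq
    rw [hCdef]; nlinarith
  set y := x t with hy
  set z := xN N t with hz
  have hy0 : 0 ≤ y := hnnx t ht
  have hz0 : 0 ≤ z := hnnz t ht
  set f : ℝ → ℝ := fun q => (g q)⁻¹ with hfdef
  set fN : ℝ → ℝ := fun q => (gN N q)⁻¹ with hfNdef
  have hty : (∫ q in (0:ℝ)..y, f q) = t := hidx t ht
  have htz : (∫ q in (0:ℝ)..z, fN q) = t := hidz t ht
  have hfc : ContinuousOn f (Ici 0) := hgc.inv₀ (fun q hq => ne_of_gt (hgq q hq))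
  have hfNc : ContinuousOn fN (Ici 0) := (hgNc N).inv₀ (fun q hq => ne_of_gt (hgNq q hq))
  have hsub : ∀ a b : ℝ, 0 ≤ a → 0 ≤ b → uIcc a b ⊆ Ici 0 := by
    intro a b ha hb q hq
    exact le_trans (le_min ha hb) hq.1
  have intf : ∀ a b : ℝ, 0 ≤ a → 0 ≤ b → IntervalIntegrable f MeasureTheory.volume a b :=
    fun a b ha hb => (hfc.mono (hsub a b ha hb)).intervalIntegrable
  have intfN : ∀ a b : ℝ, 0 ≤ a → 0 ≤ b → IntervalIntegrable fN MeasureTheory.volume a b :=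
    fun a b ha hb => (hfNc.mono (hsub a b ha hb)).intervalIntegrable
  set h : ℝ → ℝ := fun q => |fN q - f q| with hhdef
  have hhc : ContinuousOn h (Ici 0) := (hfNc.sub hfc).abs
  have inth : ∀ a b : ℝ, 0 ≤ a → 0 ≤ b → IntervalIntegrable h MeasureTheory.volume a b :=
    fun a b ha hb => (hhc.mono (hsub a b ha hb)).intervalIntegrable
  -- Step 1 : |y - z| ≤ C * |∫ z..y f|
  have hfge : ∀ q ∈ Ici (0:ℝ), C⁻¹ ≤ f q := fun q hq =>
    inv_anti₀ (hgq q hq) (hgub q hq)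
  have hstep : ∀ a b : ℝ, 0 ≤ a → a ≤ b →
      b - a ≤ C * (∫ q in a..b, f q) ∧ 0 ≤ ∫ q in a..b, f q := by
    intro a b ha hab
    have hb : 0 ≤ b := le_trans ha hab
    have hmono := intervalIntegral.integral_mono_on hab
      (intervalIntegrable_const (c := C⁻¹)) (intf a b ha hb)
      (fun q hq => hfge q (le_trans ha hq.1))
    rw [intervalIntegral.integral_const, smul_eq_mul] at hmono
    have hconstnn : 0 ≤ (b - a) * C⁻¹ := mul_nonneg (sub_nonneg.2 hab) (inv_nonneg.2 hCpos.le)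
    constructor
    · calc b - a = C * ((b - a) * C⁻¹) := by field_simp
        _ ≤ C * ∫ q in a..b, f q := by
            exact mul_le_mul_of_nonneg_left hmono hCpos.le
    · linarith
  have key1 : |y - z| ≤ C * |∫ q in z..y, f q| := by
    rcases le_total z y with hzy | hyz
    · obtain ⟨k1, k2⟩ := hstep z y hz0 hzy
      rw [abs_of_nonneg (sub_nonneg.2 hzy), abs_of_nonneg k2]
      exact k1
    · obtain ⟨k1, k2⟩ := hstep y z hy0 hyz
      rw [abs_sub_comm, abs_of_nonneg (sub_nonneg.2 hyz),
        intervalIntegral.integral_symm, abs_neg, abs_of_nonneg k2]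
      exact k1
  -- Step 2 : ∫ z..y f = ∫ 0..z (fN - f)
  have key2 : (∫ q in z..y, f q) = ∫ q in (0:ℝ)..z, (fN q - f q) := by
    have e1 : (∫ q in z..y, f q) = (∫ q in (0:ℝ)..y, f q) - ∫ q in (0:ℝ)..z, f q :=
      (intervalIntegral.integral_interval_sub_left (intf 0 y le_rfl hy0)
        (intf 0 z le_rfl hz0)).symm
    rw [e1, hty, ← htz, ← intervalIntegral.integral_sub (intfN 0 z le_rfl hz0)
      (intf 0 z le_rfl hz0)]
  -- Step 3 : pointwise bounds on h
  have hdiff : ∀ q ≥ (0:ℝ), h q ≤ σ⁻¹ * σ⁻¹ * |gN N q - g q| := by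
    intro q hq
    have hg1 := hgq q hq
    have hg2 := hgNq q hq
    have e1 : fN q - f q = (g q - gN N q) * ((g q)⁻¹ * (gN N q)⁻¹) := by
      rw [hfdef, hfNdef]
      field_simp
    have e2 : h q = |gN N q - g q| * ((g q)⁻¹ * (gN N q)⁻¹) := by
      rw [hhdef]
      simp only []
      rw [e1, abs_mul, abs_of_nonneg (mul_nonneg (inv_nonneg.2 hg1.le) (inv_nonneg.2 hg2.le)),
        abs_sub_comm]
    rw [e2, mul_comm (σ⁻¹ * σ⁻¹) _]
    apply mul_le_mul_of_nonneg_left _ (abs_nonneg _)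
    exact mul_le_mul (inv_anti₀ hσ (hglb q hq)) (inv_anti₀ hσ (hgNlb N q hq))
      (inv_nonneg.2 hg2.le) (inv_nonneg.2 hσ.le)
  have hA : ∀ q ≥ (0:ℝ), h q ≤ ε' / σ ^ 2 := by
    intro q hq
    have e : σ⁻¹ * σ⁻¹ * ε' = ε' / σ ^ 2 := by
      rw [div_eq_mul_inv, pow_two, mul_inv]
      ring
    calc h q ≤ σ⁻¹ * σ⁻¹ * |gN N q - g q| := hdiff q hq
      _ ≤ σ⁻¹ * σ⁻¹ * ε' := by
          apply mul_le_mul_of_nonneg_left (hN₀ N hN q hq) (by positivity)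
      _ = ε' / σ ^ 2 := e
  have hB : ∀ q ≥ (0:ℝ), h q ≤ (2 * M / σ ^ 2) * Real.exp (-γ * q) := by
    intro q hq
    have h2 : |gN N q - g q| ≤ 2 * M * Real.exp (-γ * q) := by
      have d1 := hgNdecay N q hq
      have d2 := hgdecay q hq
      calc |gN N q - g q| ≤ |gN N q - ℓ| + |ℓ - g q| := abs_sub_le _ _ _
        _ = |gN N q - ℓ| + |g q - ℓ| := by rw [abs_sub_comm ℓ _]
        _ ≤ 2 * M * Real.exp (-γ * q) := by linarith
    have e : σ⁻¹ * σ⁻¹ * (2 * M * Real.exp (-γ * q)) = (2 * M / σ ^ 2) * Real.exp (-γ * q) := by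
      rw [div_eq_mul_inv, pow_two, mul_inv]
      ring
    calc h q ≤ σ⁻¹ * σ⁻¹ * |gN N q - g q| := hdiff q hq
      _ ≤ σ⁻¹ * σ⁻¹ * (2 * M * Real.exp (-γ * q)) := by
          apply mul_le_mul_of_nonneg_left h2 (by positivity)
      _ = (2 * M / σ ^ 2) * Real.exp (-γ * q) := e
  -- Step 4 : integral bound  ∫ 0..z h ≤ ε / C
  have hplus : (Q + 1) * (ε' / σ ^ 2) = ε / (2 * C) := by
    rw [hε'def]
    field_simp
  have hconstbound : ∀ b : ℝ, 0 ≤ b → b ≤ Q + 1 → (∫ q in (0:ℝ)..b, h q) ≤ ε / (2 * C) := by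
    intro b hb hbQ
    have hm := intervalIntegral.integral_mono_on hb (inth 0 b le_rfl hb)
      (intervalIntegrable_const (c := ε' / σ ^ 2)) (fun q hq => hA q hq.1)
    rw [intervalIntegral.integral_const, smul_eq_mul, sub_zero] at hm
    have : b * (ε' / σ ^ 2) ≤ (Q + 1) * (ε' / σ ^ 2) :=
      mul_le_mul_of_nonneg_right hbQ (by positivity)
    linarith [hplus ▸ this]
  have hzbound : (∫ q in (0:ℝ)..z, h q) ≤ ε / C := by
    have hεC : ε / (2 * C) + ε / (2 * C) = ε / C := by
      field_simp
      ring
    rcases le_total z Q with hzQ | hQz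
    · have := hconstbound z hz0 (by linarith)
      linarith [hhalf]
    · have hsplit : (∫ q in (0:ℝ)..z, h q) =
          (∫ q in (0:ℝ)..Q, h q) + ∫ q in Q..z, h q :=
        (intervalIntegral.integral_add_adjacent_intervals (inth 0 Q le_rfl hQ0)
          (inth Q z hQ0 hz0)).symm
      have hhead := hconstbound Q hQ0 (by linarith)
      -- tail estimate
      set E : ℝ → ℝ := fun q => (2 * M / σ ^ 2) * Real.exp (-γ * q) with hEdef
      have hEcont : Continuous E := by
        apply Continuous.mul continuous_const
        exact Real.continuous_exp.comp (continuous_const.mul continuous_id)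
      have hm := intervalIntegral.integral_mono_on hQz (inth Q z hQ0 hz0)
        (hEcont.intervalIntegrable Q z) (fun q hq => hB q (le_trans hQ0 hq.1))
      set F : ℝ → ℝ := fun q => -((2 * M / (γ * σ ^ 2)) * Real.exp (-γ * q)) with hFdef
      have hFderiv : ∀ q ∈ uIcc Q z, HasDerivAt F (E q) q := by
        intro q _
        have h1 : HasDerivAt (fun q : ℝ => -γ * q) (-γ) q := by
          simpa using (hasDerivAt_id q).const_mul (-γ)
        have h2 := h1.exp
        have h3 := (h2.const_mul (2 * M / (γ * σ ^ 2))).neg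
        refine h3.congr_deriv ?_
        rw [hEdef]
        field_simp
      have hEint : (∫ q in Q..z, E q) = F z - F Q :=
        intervalIntegral.integral_eq_sub_of_hasDerivAt hFderiv
          ((hEcont.intervalIntegrable Q z))
      have htail : (∫ q in Q..z, h q) ≤ ε / (2 * C) := by
        have hez : 0 < Real.exp (-γ * z) := Real.exp_pos _
        have hcoef : 0 ≤ 2 * M / (γ * σ ^ 2) := by positivity
        have hFzQ : F z - F Q ≤ (2 * M / (γ * σ ^ 2)) * Real.exp (-γ * Q) := by
          rw [hFdef]
          simp only []
          nlinarith
        calc (∫ q in Q..z, h q) ≤ ∫ q in Q..z, E q := hm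
          _ = F z - F Q := hEint
          _ ≤ (2 * M / (γ * σ ^ 2)) * Real.exp (-γ * Q) := hFzQ
          _ ≤ ε / (2 * C) := hQbig
      linarith [hsplit, hhead, htail]
  -- conclusion
  have key3 : |∫ q in (0:ℝ)..z, (fN q - f q)| ≤ ∫ q in (0:ℝ)..z, h q :=
    intervalIntegral.abs_integral_le_integral_abs hz0
  have : |y - z| ≤ C * (ε / C) := by
    calc |y - z| ≤ C * |∫ q in z..y, f q| := key1
      _ = C * |∫ q in (0:ℝ)..z, (fN q - f q)| := by rw [key2]
      _ ≤ C * (∫ q in (0:ℝ)..z, h q) := mul_le_mul_of_nonneg_left key3 hCpos.le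
      _ ≤ C * (ε / C) := mul_le_mul_of_nonneg_left hzbound hCpos.le
  have hCε : C * (ε / C) = ε := by field_simp
  rw [abs_sub_comm] at this
  rw [← hy, ← hz] at *
  linarith [hCε ▸ this]
end

section
/- Let ρ, ρ* : [p₀,0] → ℝ be positive with ρ, ρ* ≥ m > 0, and d > 0. If c and c* satisfy d = ∫_{p₀}^0 (c√ρ(s))^{-1} ds and d = ∫_{p₀}^0 (c*√ρ*(s))^{-1} ds, then c − c* = (1/d)∫_{p₀}^0 [ρ(s)^{-1/2} − ρ*(s)^{-1/2}] ds, and |c − c*| ≤ (|p₀|/(2 d m^{3/2})) ‖ρ − ρ*‖_{L^∞}. -/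
open intervalIntegral Set

lemma sqrt_diff_bound (m a b B : ℝ) (hm : 0 < m) (ha : m ≤ a) (hb : m ≤ b)
    (hab : |a - b| ≤ B) :
    |1 / Real.sqrt a - 1 / Real.sqrt b| ≤ B / (2 * (m * Real.sqrt m)) := by
  have ha0 : 0 < a := hm.trans_le ha
  have hb0 : 0 < b := hm.trans_le hb
  have hsa : 0 < Real.sqrt a := Real.sqrt_pos.2 ha0
  have hsb : 0 < Real.sqrt b := Real.sqrt_pos.2 hb0
  have hsm : 0 < Real.sqrt m := Real.sqrt_pos.2 hm
  have hsam : Real.sqrt m ≤ Real.sqrt a := Real.sqrt_le_sqrt ha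
  have hsbm : Real.sqrt m ≤ Real.sqrt b := Real.sqrt_le_sqrt hb
  have key : (1 / Real.sqrt a - 1 / Real.sqrt b) * (Real.sqrt a * Real.sqrt b * (Real.sqrt a + Real.sqrt b)) = b - a := by
    have h2a := Real.mul_self_sqrt ha0.le
    have h2b := Real.mul_self_sqrt hb0.le
    field_simp
    ring_nf
    linear_combination h2b - h2a
  have hden : 2 * (m * Real.sqrt m) ≤ Real.sqrt a * Real.sqrt b * (Real.sqrt a + Real.sqrt b) := by
    have h1 : m ≤ Real.sqrt a * Real.sqrt b := by
      calc m = Real.sqrt m * Real.sqrt m := (Real.mul_self_sqrt hm.le).symm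
      _ ≤ Real.sqrt a * Real.sqrt b := by
        exact mul_le_mul hsam hsbm hsm.le hsa.le
    have h2 : 2 * Real.sqrt m ≤ Real.sqrt a + Real.sqrt b := by linarith
    calc 2 * (m * Real.sqrt m) = m * (2 * Real.sqrt m) := by ring
    _ ≤ (Real.sqrt a * Real.sqrt b) * (Real.sqrt a + Real.sqrt b) :=
        mul_le_mul h1 h2 (by positivity) (by positivity)
  have hdpos : (0:ℝ) < 2 * (m * Real.sqrt m) := by positivity
  have hDpos : 0 < Real.sqrt a * Real.sqrt b * (Real.sqrt a + Real.sqrt b) := by positivity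
  have heq : 1 / Real.sqrt a - 1 / Real.sqrt b
      = (b - a) / (Real.sqrt a * Real.sqrt b * (Real.sqrt a + Real.sqrt b)) := by
    rw [eq_div_iff hDpos.ne']
    exact key
  rw [heq, abs_div, abs_of_pos hDpos]
  exact div_le_div₀ (le_trans (abs_nonneg _) hab) (by rwa [abs_sub_comm]) hdpos hden

/-- Continuity of the wave speed in the streamline density: if `c` and `c*` both
satisfy the depth coupling relation for densities `ρ`, `ρ*` bounded below by
`m > 0`, then `c − c* = (1/d)∫(ρ^{-1/2} − ρ*^{-1/2})` and
`|c − c*| ≤ (|p₀|/(2dm^{3/2})) ‖ρ − ρ*‖_∞`. -/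
theorem wave_speed_continuity (p₀ d m c cs : ℝ)
    (hp₀ : p₀ < 0) (hd : 0 < d) (hm : 0 < m) (hc : 0 < c) (hcs : 0 < cs)
    (ρ ρs : ℝ → ℝ)
    (hρc : ContinuousOn ρ (Icc p₀ 0)) (hρsc : ContinuousOn ρs (Icc p₀ 0))
    (hρlb : ∀ s ∈ Icc p₀ (0:ℝ), m ≤ ρ s) (hρslb : ∀ s ∈ Icc p₀ (0:ℝ), m ≤ ρs s)
    (hcoup : d = ∫ s in p₀..(0:ℝ), 1 / (c * Real.sqrt (ρ s)))
    (hcoups : d = ∫ s in p₀..(0:ℝ), 1 / (cs * Real.sqrt (ρs s))) :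
    c - cs = (1 / d) * ∫ s in p₀..(0:ℝ), (1 / Real.sqrt (ρ s) - 1 / Real.sqrt (ρs s)) ∧
    ∀ B : ℝ, 0 ≤ B → (∀ s ∈ Icc p₀ (0:ℝ), |ρ s - ρs s| ≤ B) →
      |c - cs| ≤ |p₀| / (2 * d * (m * Real.sqrt m)) * B := by
  have huIcc : uIcc p₀ (0:ℝ) = Icc p₀ 0 := uIcc_of_le hp₀.le
  have hfc : ContinuousOn (fun s => 1 / Real.sqrt (ρ s)) (Icc p₀ 0) :=
    continuousOn_const.div (Real.continuous_sqrt.comp_continuousOn hρc)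
      (fun s hs => (Real.sqrt_pos.2 (hm.trans_le (hρlb s hs))).ne')
  have hfsc : ContinuousOn (fun s => 1 / Real.sqrt (ρs s)) (Icc p₀ 0) :=
    continuousOn_const.div (Real.continuous_sqrt.comp_continuousOn hρsc)
      (fun s hs => (Real.sqrt_pos.2 (hm.trans_le (hρslb s hs))).ne')
  have hfI : IntervalIntegrable (fun s => 1 / Real.sqrt (ρ s)) MeasureTheory.volume p₀ 0 :=
    (huIcc ▸ hfc).intervalIntegrable
  have hfsI : IntervalIntegrable (fun s => 1 / Real.sqrt (ρs s)) MeasureTheory.volume p₀ 0 :=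
    (huIcc ▸ hfsc).intervalIntegrable
  have hI : d = (1 / c) * ∫ s in p₀..(0:ℝ), 1 / Real.sqrt (ρ s) := by
    rw [hcoup, ← intervalIntegral.integral_const_mul]
    simp_rw [one_div_mul_one_div]
  have hIs : d = (1 / cs) * ∫ s in p₀..(0:ℝ), 1 / Real.sqrt (ρs s) := by
    rw [hcoups, ← intervalIntegral.integral_const_mul]
    simp_rw [one_div_mul_one_div]
  have hIc : ∫ s in p₀..(0:ℝ), 1 / Real.sqrt (ρ s) = c * d := by
    rw [hI]; field_simp
  have hIcs : ∫ s in p₀..(0:ℝ), 1 / Real.sqrt (ρs s) = cs * d := by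
    rw [hIs]; field_simp
  have hpart1 : c - cs = (1 / d) * ∫ s in p₀..(0:ℝ),
      (1 / Real.sqrt (ρ s) - 1 / Real.sqrt (ρs s)) := by
    rw [intervalIntegral.integral_sub hfI hfsI, hIc, hIcs]
    field_simp
  refine ⟨hpart1, fun B hB hBb => ?_⟩
  have hsub : uIoc p₀ (0:ℝ) ⊆ Icc p₀ 0 := by
    rw [uIoc_of_le hp₀.le]
    exact Ioc_subset_Icc_self
  have hbound : ∀ x ∈ uIoc p₀ (0:ℝ),
      ‖(1 / Real.sqrt (ρ x) - 1 / Real.sqrt (ρs x))‖ ≤ B / (2 * (m * Real.sqrt m)) := by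
    intro x hx
    exact sqrt_diff_bound m (ρ x) (ρs x) B hm (hρlb x (hsub hx)) (hρslb x (hsub hx))
      (hBb x (hsub hx))
  have hnorm := intervalIntegral.norm_integral_le_of_norm_le_const hbound
  rw [zero_sub, abs_neg] at hnorm
  have habs : |c - cs| = (1 / d) * ‖∫ s in p₀..(0:ℝ),
      (1 / Real.sqrt (ρ s) - 1 / Real.sqrt (ρs s))‖ := by
    rw [hpart1, Real.norm_eq_abs, abs_mul, abs_of_pos (by positivity : (0:ℝ) < 1 / d)]
  rw [habs]
  have hfin : (1 / d) * (B / (2 * (m * Real.sqrt m)) * |p₀|)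
      = |p₀| / (2 * d * (m * Real.sqrt m)) * B := by
    have : Real.sqrt m ≠ 0 := (Real.sqrt_pos.2 hm).ne'
    field_simp
  calc (1 / d) * ‖∫ s in p₀..(0:ℝ), (1 / Real.sqrt (ρ s) - 1 / Real.sqrt (ρs s))‖
      ≤ (1 / d) * (B / (2 * (m * Real.sqrt m)) * |p₀|) := by
        apply mul_le_mul_of_nonneg_left hnorm (by positivity)
  _ = |p₀| / (2 * d * (m * Real.sqrt m)) * B := hfin
end
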